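/- Let V and W be locally convex real topological vector spaces whose topologies are induced by translation-invariant metrics d_V, d_W with balanced balls, and assume V is strict. For i ∈ ℕ let c(i) (resp. C(i)) be the closed convex hull of the ball of radius 2^{-i} around 0 in V (resp. W). Let TL(V,W) be the set of continuous linear maps A : V → W for which there exists r ∈ ℕ such that for every M ∈ ℕ there is C_M > 0 with A(c(M+r)) ⊆ C_M·C(M). For i,j ∈ ℕ set K_{i,j} := {A ∈ TL(V,W) : A(2^i·c(i)) ⊆ C(j)} and K_j := ⋃_{i∈ℕ} K_{i,j}. Then the sets 2^{-n}·K_j (n, j ∈ ℕ) form a neighborhood base at 0 of a Hausdorff, metrizable vector space topology on TL(V,W). -/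

import Mathlib

open Pointwise

/-- The closed convex hull `c(i)` of the metric ball of radius `2⁻ⁱ` around `0`. -/
def cHull (V : Type*) [AddCommGroup V] [Module ℝ V] [MetricSpace V]
    [IsTopologicalAddGroup V] [ContinuousSMul ℝ V] (i : ℕ) : Set V :=
  closure (convexHull ℝ (Metric.ball (0 : V) (2⁻¹ ^ i)))

section TameCLM

variable (V W : Type*)
    [AddCommGroup V] [Module ℝ V] [MetricSpace V] [IsTopologicalAddGroup V]
    [ContinuousSMul ℝ V]
    [AddCommGroup W] [Module ℝ W] [MetricSpace W] [IsTopologicalAddGroup W]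
    [ContinuousSMul ℝ W]

variable {W} in
theorem cHull_balanced
    (hWballs : ∀ (r t : ℝ) (w : W), |t| ≤ 1 → dist w 0 < r → dist (t • w) 0 < r)
    (M : ℕ) : Balanced ℝ (cHull W M) := by
  refine Balanced.closure (Balanced.convexHull ?_)
  intro a ha x hx
  rcases hx with ⟨y, hy, rfl⟩
  rw [Metric.mem_ball] at *
  simpa using hWballs _ a y (by simpa [Real.norm_eq_abs] using ha) (by simpa using hy)

variable {W} in
theorem cHull_convex (M : ℕ) : Convex ℝ (cHull W M) :=
  (convex_convexHull ℝ _).closure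

variable {W} in
theorem cHull_anti {i j : ℕ} (h : i ≤ j) : cHull W j ⊆ cHull W i := by
  refine closure_mono (convexHull_mono (Metric.ball_subset_ball ?_))
  exact pow_le_pow_of_le_one (by norm_num) (by norm_num) h

variable {W} in
theorem zero_mem_cHull (M : ℕ) : (0 : W) ∈ cHull W M :=
  subset_closure (subset_convexHull ℝ _ (Metric.mem_ball_self (by positivity)))

/-- The space `TL(V,W)` of tame continuous linear maps: those `A : V →L[ℝ] W` for which
there is an `r ∈ ℕ` such that for every `M` there is `C_M > 0` with
`A (c(M+r)) ⊆ C_M • C(M)`.  It is a linear subspace of `V →L[ℝ] W`. -/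
def TameCLM
    (hWballs : ∀ (r t : ℝ) (w : W), |t| ≤ 1 → dist w 0 < r → dist (t • w) 0 < r) :
    Submodule ℝ (V →L[ℝ] W) where
  carrier := {A | ∃ r : ℕ, ∀ M : ℕ, ∃ C : ℝ, 0 < C ∧
    A '' cHull V (M + r) ⊆ C • cHull W M}
  zero_mem' := by
    refine ⟨0, fun M => ⟨1, one_pos, ?_⟩⟩
    rintro x ⟨v, hv, rfl⟩
    simp only [ContinuousLinearMap.zero_apply, one_smul]
    exact zero_mem_cHull M
  add_mem' := by
    rintro A B ⟨rA, hA⟩ ⟨rB, hB⟩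
    refine ⟨max rA rB, fun M => ?_⟩
    obtain ⟨CA, hCA, hCA'⟩ := hA (M + (max rA rB - rA))
    obtain ⟨CB, hCB, hCB'⟩ := hB (M + (max rA rB - rB))
    refine ⟨CA + CB, by positivity, ?_⟩
    rintro x ⟨v, hv, rfl⟩
    rw [(cHull_convex M).add_smul hCA.le hCB.le]
    have hvA : v ∈ cHull V (M + (max rA rB - rA) + rA) := by
      refine cHull_anti (by omega) hv
    have hvB : v ∈ cHull V (M + (max rA rB - rB) + rB) := by
      refine cHull_anti (by omega) hv
    have h1 : A v ∈ CA • cHull W M :=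
      Set.smul_set_mono (cHull_anti (by omega)) (hCA' ⟨v, hvA, rfl⟩)
    have h2 : B v ∈ CB • cHull W M :=
      Set.smul_set_mono (cHull_anti (by omega)) (hCB' ⟨v, hvB, rfl⟩)
    exact Set.add_mem_add h1 h2
  smul_mem' := by
    rintro a A ⟨r, hA⟩
    refine ⟨r, fun M => ?_⟩
    obtain ⟨C, hC, hC'⟩ := hA M
    refine ⟨(|a| + 1) * C, by positivity, ?_⟩
    rintro x ⟨v, hv, rfl⟩
    have h1 : A v ∈ C • cHull W M := hC' ⟨v, hv, rfl⟩
    obtain ⟨w, hw, hw'⟩ := h1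
    have : (a • A) v = (a * C) • w := by
      simp [← hw', smul_smul]
    rw [this]
    refine (cHull_balanced hWballs M).smul_mono ?_ (Set.smul_mem_smul_set hw)
    simp only [Real.norm_eq_abs, abs_mul, abs_of_pos hC,
      abs_of_pos (by positivity : (0:ℝ) < (|a| + 1) * C)]
    nlinarith [abs_nonneg a]

end TameCLM


section AuxStmt16

open Filter

variable {X : Type*} [AddCommGroup X] [Module ℝ X] [MetricSpace X]
    [IsTopologicalAddGroup X] [ContinuousSMul ℝ X]

theorem aux_two_smul_ball (htrans : ∀ x y z : X, dist (x + z) (y + z) = dist x y) (i : ℕ) :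
    (2:ℝ) • Metric.ball (0:X) (2⁻¹ ^ (i+1)) ⊆ Metric.ball (0:X) (2⁻¹ ^ i) := by
  rintro _ ⟨v, hv, rfl⟩
  rw [Metric.mem_ball] at hv ⊢
  have h2 : dist ((2:ℝ) • v) v = dist v 0 := by
    have h := htrans v 0 v
    rw [zero_add] at h
    rw [← h]
    congr 1
    module
  have h1 := dist_triangle ((2:ℝ) • v) v 0
  rw [h2] at h1
  have h3 : (2⁻¹:ℝ) ^ (i+1) + 2⁻¹ ^ (i+1) = 2⁻¹ ^ i := by ring
  linarith

theorem aux_two_smul_cHull (htrans : ∀ x y z : X, dist (x + z) (y + z) = dist x y) (i : ℕ) :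
    (2:ℝ) • cHull X (i+1) ⊆ cHull X i := by
  have h1 : (2:ℝ) • cHull X (i+1) ⊆
      closure ((2:ℝ) • convexHull ℝ (Metric.ball (0:X) (2⁻¹ ^ (i+1)))) := by
    rw [← Set.image_smul, ← Set.image_smul]
    exact image_closure_subset_closure_image (continuous_const_smul _)
  refine h1.trans (closure_mono ?_)
  rw [← convexHull_smul]
  exact convexHull_mono (aux_two_smul_ball htrans i)

theorem aux_pow_smul_cHull (htrans : ∀ x y z : X, dist (x + z) (y + z) = dist x y)
    {i i' : ℕ} (h : i ≤ i') :
    ((2:ℝ) ^ i') • cHull X i' ⊆ ((2:ℝ) ^ i) • cHull X i := by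
  induction i', h using Nat.le_induction with
  | base => exact subset_rfl
  | succ k hk ih =>
    refine Set.Subset.trans ?_ ih
    have h1 : ((2:ℝ) ^ (k+1)) • cHull X (k+1) = ((2:ℝ) ^ k) • ((2:ℝ) • cHull X (k+1)) := by
      rw [smul_smul, ← pow_succ]
    rw [h1]
    exact Set.smul_set_mono (aux_two_smul_cHull htrans k)

theorem aux_cHull_add (htrans : ∀ x y z : X, dist (x + z) (y + z) = dist x y) (j : ℕ) :
    cHull X (j+1) + cHull X (j+1) ⊆ cHull X j := by
  rintro _ ⟨a, ha, b, hb, rfl⟩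
  have hm : (2⁻¹:ℝ) • a + (2⁻¹:ℝ) • b ∈ cHull X (j+1) :=
    (cHull_convex (j+1)) ha hb (by norm_num) (by norm_num) (by norm_num)
  exact aux_two_smul_cHull htrans j ⟨_, hm, by module⟩

end AuxStmt16

open Topology Filter in
set_option maxHeartbeats 1000000 in
/-- Let `V`, `W` be locally convex real tvs whose topologies come from
translation-invariant metrics with balanced balls, `V` strict.  On the space
`TL(V,W)` of tame continuous linear maps, the sets `2⁻ⁿ • K_j`, where
`K_j = ⋃ i K_{i,j}` and `K_{i,j} = {A | A (2ⁱ • c(i)) ⊆ C(j)}`, form a neighborhood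
base at `0` of a Hausdorff, metrizable vector space topology. -/
theorem stmt16 (V W : Type*)
    [AddCommGroup V] [Module ℝ V] [MetricSpace V] [IsTopologicalAddGroup V]
    [ContinuousSMul ℝ V] [LocallyConvexSpace ℝ V]
    [AddCommGroup W] [Module ℝ W] [MetricSpace W] [IsTopologicalAddGroup W]
    [ContinuousSMul ℝ W] [LocallyConvexSpace ℝ W]
    (hVtrans : ∀ x y z : V, dist (x + z) (y + z) = dist x y)
    (hVballs : ∀ (r t : ℝ) (v : V), |t| ≤ 1 → dist v 0 < r → dist (t • v) 0 < r)
    (hWtrans : ∀ x y z : W, dist (x + z) (y + z) = dist x y)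
    (hWballs : ∀ (r t : ℝ) (w : W), |t| ≤ 1 → dist w 0 < r → dist (t • w) 0 < r)
    (hVstrict : ∀ v : V, ∃ C : ℝ, ∀ r : ℝ, 0 < r → dist (r • v) 0 ≤ C * r) :
    ∃ t : TopologicalSpace (TameCLM V W hWballs),
      @IsTopologicalAddGroup (TameCLM V W hWballs) t _ ∧
      @ContinuousSMul ℝ (TameCLM V W hWballs) _ _ t ∧
      @T2Space (TameCLM V W hWballs) t ∧
      @TopologicalSpace.MetrizableSpace (TameCLM V W hWballs) t ∧
      (@nhds (TameCLM V W hWballs) t 0).HasBasis (fun _ : ℕ × ℕ => True)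
        (fun p => ((2:ℝ) ^ p.1)⁻¹ •
          ⋃ i : ℕ, {A : TameCLM V W hWballs |
            (A : V →L[ℝ] W) '' (((2:ℝ) ^ i) • cHull V i) ⊆ cHull W p.2}) := by
  classical
  let TL := TameCLM V W hWballs
  let K : ℕ → Set TL := fun j =>
    ⋃ i : ℕ, {A : TL | (A : V →L[ℝ] W) '' (((2:ℝ) ^ i) • cHull V i) ⊆ cHull W j}
  have h2pow : ∀ n : ℕ, ((2:ℝ) ^ n) ≠ 0 := fun n => by positivity
  have hpiece : ∀ (j : ℕ) {i i' : ℕ}, i ≤ i' →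
      {A : TL | (A : V →L[ℝ] W) '' (((2:ℝ) ^ i) • cHull V i) ⊆ cHull W j} ⊆
      {A : TL | (A : V →L[ℝ] W) '' (((2:ℝ) ^ i') • cHull V i') ⊆ cHull W j} := by
    intro j i i' h A hA
    exact (Set.image_mono (aux_pow_smul_cHull hVtrans h)).trans hA
  have hK0 : ∀ j, (0 : TL) ∈ K j := by
    intro j
    refine Set.mem_iUnion.2 ⟨0, ?_⟩
    rintro _ ⟨v, hv, rfl⟩
    simpa using zero_mem_cHull (W := W) j
  have hKbal : ∀ j, Balanced ℝ (K j) := by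
    intro j a ha
    rintro _ ⟨A, hA, rfl⟩
    obtain ⟨i, hAi⟩ := Set.mem_iUnion.1 hA
    refine Set.mem_iUnion.2 ⟨i, ?_⟩
    rintro _ ⟨v, hv, rfl⟩
    have h1 : (A : V →L[ℝ] W) v ∈ cHull W j := hAi ⟨v, hv, rfl⟩
    have h2 : ((a • A : TL) : V →L[ℝ] W) v = a • ((A : V →L[ℝ] W) v) := rfl
    rw [h2]
    exact cHull_balanced hWballs j a ha ⟨_, h1, rfl⟩
  have hKj_anti : ∀ {j j' : ℕ}, j ≤ j' → K j' ⊆ K j := by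
    intro j j' h
    exact Set.iUnion_mono fun i A hA => hA.trans (cHull_anti h)
  have hKadd : ∀ j, K (j+1) + K (j+1) ⊆ K j := by
    rintro j _ ⟨A, hA, B, hB, rfl⟩
    obtain ⟨iA, hAi⟩ := Set.mem_iUnion.1 hA
    obtain ⟨iB, hBi⟩ := Set.mem_iUnion.1 hB
    refine Set.mem_iUnion.2 ⟨max iA iB, ?_⟩
    have hA' := hpiece (j+1) (le_max_left iA iB) hAi
    have hB' := hpiece (j+1) (le_max_right iA iB) hBi
    rintro _ ⟨v, hv, rfl⟩
    have h1 : ((A + B : TL) : V →L[ℝ] W) v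
        = (A : V →L[ℝ] W) v + (B : V →L[ℝ] W) v := rfl
    rw [h1]
    exact aux_cHull_add hWtrans j (Set.add_mem_add (hA' ⟨v, hv, rfl⟩) (hB' ⟨v, hv, rfl⟩))
  have habs : ∀ (A : TL) (j : ℕ), ∃ n : ℕ,
      ∀ t : ℝ, |t| ≤ ((2:ℝ) ^ n)⁻¹ → t • A ∈ K j := by
    intro A j
    obtain ⟨r, hr⟩ := A.2
    obtain ⟨C, hC, hCsub⟩ := hr j
    obtain ⟨n, hn⟩ := pow_unbounded_of_one_lt ((2:ℝ) ^ (j + r) * C) (by norm_num : (1:ℝ) < 2)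
    refine ⟨n, fun t ht => ?_⟩
    refine Set.mem_iUnion.2 ⟨j + r, ?_⟩
    rintro _ ⟨_, ⟨u, hu, rfl⟩, rfl⟩
    have hAu : (A : V →L[ℝ] W) u ∈ C • cHull W j := hCsub ⟨u, hu, rfl⟩
    obtain ⟨w, hw, hwe⟩ := hAu
    have key : ((t • A : TL) : V →L[ℝ] W) (((2:ℝ) ^ (j+r)) • u)
        = (t * ((2:ℝ) ^ (j+r) * C)) • w := by
      have h1 : ((t • A : TL) : V →L[ℝ] W) (((2:ℝ) ^ (j+r)) • u)
          = t • ((2:ℝ) ^ (j+r)) • ((A : V →L[ℝ] W) u) := by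
        have : ((t • A : TL) : V →L[ℝ] W) = t • (A : V →L[ℝ] W) := rfl
        rw [this, ContinuousLinearMap.smul_apply, map_smul]
      rw [h1, ← hwe, smul_smul, smul_smul, mul_assoc]
    rw [key]
    refine cHull_balanced hWballs j _ ?_ ⟨w, hw, rfl⟩
    rw [Real.norm_eq_abs, abs_mul]
    have h2 : |(2:ℝ) ^ (j+r) * C| = (2:ℝ) ^ (j+r) * C := abs_of_pos (by positivity)
    rw [h2]
    calc |t| * ((2:ℝ) ^ (j+r) * C) ≤ ((2:ℝ) ^ n)⁻¹ * (2:ℝ) ^ n := by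
          exact mul_le_mul ht hn.le (by positivity) (by positivity)
      _ = 1 := inv_mul_cancel₀ (h2pow n)
  have hsub : ∀ p q : ℕ × ℕ, p.1 ≤ q.1 → p.2 ≤ q.2 →
      ((2:ℝ) ^ q.1)⁻¹ • K q.2 ⊆ ((2:ℝ) ^ p.1)⁻¹ • K p.2 := by
    intro p q h1 h2
    rintro _ ⟨a, ha, rfl⟩
    have hmem : ((2:ℝ) ^ p.1 * ((2:ℝ) ^ q.1)⁻¹) • a ∈ K p.2 := by
      refine hKbal p.2 _ ?_ ⟨a, hKj_anti h2 ha, rfl⟩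
      rw [Real.norm_eq_abs, abs_of_pos (by positivity)]
      have h3 : (2:ℝ) ^ p.1 ≤ (2:ℝ) ^ q.1 := pow_le_pow_right₀ (by norm_num) h1
      calc (2:ℝ) ^ p.1 * ((2:ℝ) ^ q.1)⁻¹ ≤ (2:ℝ) ^ q.1 * ((2:ℝ) ^ q.1)⁻¹ :=
            mul_le_mul_of_nonneg_right h3 (by positivity)
        _ = 1 := mul_inv_cancel₀ (h2pow q.1)
    refine ⟨_, hmem, ?_⟩
    show ((2:ℝ) ^ p.1)⁻¹ • (((2:ℝ) ^ p.1 * ((2:ℝ) ^ q.1)⁻¹) • a) = ((2:ℝ) ^ q.1)⁻¹ • a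
    rw [smul_smul, ← mul_assoc, inv_mul_cancel₀ (h2pow p.1), one_mul]
  let BF : FilterBasis TL :=
    { sets := Set.range (fun p : ℕ × ℕ => ((2:ℝ) ^ p.1)⁻¹ • K p.2)
      nonempty := ⟨_, ⟨(0,0), rfl⟩⟩
      inter_sets := by
        rintro _ _ ⟨p, rfl⟩ ⟨q, rfl⟩
        exact ⟨_, ⟨(max p.1 q.1, max p.2 q.2), rfl⟩,
          Set.subset_inter (hsub p _ (le_max_left _ _) (le_max_left _ _))
            (hsub q _ (le_max_right _ _) (le_max_right _ _))⟩ }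
  have hBFmem : ∀ s : Set TL, s ∈ BF ↔ ∃ p : ℕ × ℕ, ((2:ℝ) ^ p.1)⁻¹ • K p.2 = s :=
    fun s => Iff.rfl
  let BA : AddGroupFilterBasis TL :=
    { toFilterBasis := BF
      zero' := by
        rintro _ ⟨p, rfl⟩
        exact ⟨0, hK0 p.2, smul_zero _⟩
      add' := by
        rintro _ ⟨p, rfl⟩
        refine ⟨_, ⟨(p.1 + 1, p.2 + 1), rfl⟩, ?_⟩
        rintro _ ⟨x, hx, y, hy, rfl⟩
        obtain ⟨a, ha, rfl⟩ := hx
        obtain ⟨b, hb, rfl⟩ := hy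
        have hab : a + b ∈ K p.2 := hKadd p.2 (Set.add_mem_add ha hb)
        refine ⟨(2⁻¹:ℝ) • (a + b),
          hKbal p.2 (2⁻¹:ℝ) (by rw [Real.norm_eq_abs, abs_of_pos] <;> norm_num) ⟨_, hab, rfl⟩, ?_⟩
        have h' : ((2:ℝ) ^ p.1)⁻¹ * 2⁻¹ = ((2:ℝ) ^ (p.1+1))⁻¹ := by
          rw [pow_succ, mul_inv]
        show ((2:ℝ) ^ p.1)⁻¹ • ((2⁻¹:ℝ) • (a + b))
          = ((2:ℝ) ^ (p.1+1))⁻¹ • a + ((2:ℝ) ^ (p.1+1))⁻¹ • b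
        rw [smul_smul, h', smul_add]
      neg' := by
        rintro _ ⟨p, rfl⟩
        refine ⟨_, ⟨p, rfl⟩, ?_⟩
        rintro _ ⟨a, ha, rfl⟩
        have hna : -a ∈ K p.2 :=
          hKbal p.2 (-1 : ℝ) (by norm_num) ⟨a, ha, neg_one_smul ℝ a⟩
        refine Set.mem_preimage.2 ⟨-a, hna, ?_⟩
        show ((2:ℝ) ^ p.1)⁻¹ • (-a) = -(((2:ℝ) ^ p.1)⁻¹ • a)
        rw [smul_neg]
      conj' := by
        intro x₀
        rintro _ ⟨p, rfl⟩
        refine ⟨_, ⟨p, rfl⟩, ?_⟩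
        intro x hx
        have h : x₀ + x + -x₀ = x := by abel
        rw [Set.mem_preimage, h]
        exact hx }
  let B : ModuleFilterBasis ℝ TL :=
    { toAddGroupFilterBasis := BA
      smul' := by
        rintro _ ⟨p, rfl⟩
        refine ⟨Metric.ball (0:ℝ) 1, Metric.ball_mem_nhds 0 one_pos, _, ⟨p, rfl⟩, ?_⟩
        rintro _ ⟨t, ht, _, ⟨a, ha, rfl⟩, rfl⟩
        have ht' : |t| ≤ 1 := by
          have := Metric.mem_ball.1 ht
          rw [Real.dist_eq, sub_zero] at this
          linarith
        refine ⟨t • a, hKbal p.2 t (by rwa [Real.norm_eq_abs]) ⟨a, ha, rfl⟩, ?_⟩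
        show ((2:ℝ) ^ p.1)⁻¹ • (t • a) = t • (((2:ℝ) ^ p.1)⁻¹ • a)
        rw [smul_comm]
      smul_left' := by
        intro x₀
        rintro _ ⟨p, rfl⟩
        obtain ⟨m, hm⟩ := pow_unbounded_of_one_lt |x₀| (by norm_num : (1:ℝ) < 2)
        refine ⟨_, ⟨(p.1 + m, p.2), rfl⟩, ?_⟩
        rintro _ ⟨a, ha, rfl⟩
        rw [Set.mem_preimage]
        have hcoef : |x₀ * ((2:ℝ) ^ m)⁻¹| ≤ 1 := by
          rw [abs_mul, abs_of_pos (by positivity : (0:ℝ) < ((2:ℝ) ^ m)⁻¹)]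
          have h1 : |x₀| * ((2:ℝ) ^ m)⁻¹ ≤ (2:ℝ) ^ m * ((2:ℝ) ^ m)⁻¹ :=
            mul_le_mul_of_nonneg_right hm.le (by positivity)
          rwa [mul_inv_cancel₀ (h2pow m)] at h1
        refine ⟨(x₀ * ((2:ℝ) ^ m)⁻¹) • a,
          hKbal p.2 _ (by rwa [Real.norm_eq_abs]) ⟨a, ha, rfl⟩, ?_⟩
        show ((2:ℝ) ^ p.1)⁻¹ • ((x₀ * ((2:ℝ) ^ m)⁻¹) • a)
          = x₀ • (((2:ℝ) ^ (p.1 + m))⁻¹ • a)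
        rw [smul_smul, smul_smul]
        congr 1
        rw [pow_add, mul_inv]
        ring
      smul_right' := by
        intro A₀
        rintro _ ⟨p, rfl⟩
        obtain ⟨n', hn'⟩ := habs A₀ p.2
        have hball : Metric.closedBall (0:ℝ) (((2:ℝ) ^ (p.1 + n'))⁻¹) ∈ 𝓝 (0:ℝ) :=
          Metric.closedBall_mem_nhds 0 (by positivity)
        filter_upwards [hball] with t ht
        rw [Metric.mem_closedBall, Real.dist_eq, sub_zero] at ht
        refine ⟨((2:ℝ) ^ p.1 * t) • A₀, hn' _ ?_, ?_⟩
        · rw [abs_mul, abs_of_pos (by positivity : (0:ℝ) < (2:ℝ) ^ p.1)]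
          calc (2:ℝ) ^ p.1 * |t| ≤ (2:ℝ) ^ p.1 * ((2:ℝ) ^ (p.1 + n'))⁻¹ :=
                mul_le_mul_of_nonneg_left ht (by positivity)
            _ = ((2:ℝ) ^ n')⁻¹ := by
                rw [pow_add, mul_inv, ← mul_assoc, mul_inv_cancel₀ (h2pow p.1), one_mul]
        · show ((2:ℝ) ^ p.1)⁻¹ • (((2:ℝ) ^ p.1 * t) • A₀) = t • A₀
          rw [smul_smul, ← mul_assoc, inv_mul_cancel₀ (h2pow p.1), one_mul] }
  letI t : TopologicalSpace TL := B.topology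
  haveI tgroup : @IsTopologicalAddGroup TL t _ := BA.isTopologicalAddGroup
  haveI tsmul : @ContinuousSMul ℝ TL _ _ t := B.continuousSMul
  have hbasis : (@nhds TL t 0).HasBasis (fun _ : ℕ × ℕ => True)
      (fun p : ℕ × ℕ => ((2:ℝ) ^ p.1)⁻¹ • K p.2) := by
    refine BA.nhds_zero_hasBasis.to_hasBasis ?_ ?_
    · rintro s ⟨p, rfl⟩
      exact ⟨p, trivial, subset_rfl⟩
    · intro p _
      exact ⟨_, ⟨p, rfl⟩, subset_rfl⟩
  haveI ht2 : @T2Space TL t := by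
    refine IsTopologicalAddGroup.t2Space_of_zero_sep ?_
    intro A hA
    have hA' : (A : V →L[ℝ] W) ≠ 0 := by
      intro h
      exact hA (Subtype.ext h)
    obtain ⟨v, hv⟩ : ∃ v, (A : V →L[ℝ] W) v ≠ 0 := by
      by_contra h
      push_neg at h
      exact hA' (ContinuousLinearMap.ext fun v => by simp [h v])
    have hδpos : 0 < dist ((A : V →L[ℝ] W) v) 0 := dist_pos.2 hv
    set δ := dist ((A : V →L[ℝ] W) v) 0 with hδ
    obtain ⟨S, ⟨hS_nhds, hS_conv⟩, hS_sub⟩ :=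
      (LocallyConvexSpace.convex_basis_zero ℝ W).mem_iff.1
        (Metric.ball_mem_nhds (0:W) (by positivity : (0:ℝ) < δ/2))
    obtain ⟨ε, hε, hballS⟩ := Metric.mem_nhds_iff.1 hS_nhds
    obtain ⟨j, hj⟩ := exists_pow_lt_of_lt_one hε (by norm_num : (2⁻¹:ℝ) < 1)
    have hCj : cHull W j ⊆ Metric.closedBall 0 (δ/2) := by
      have h1 : Metric.ball (0:W) (2⁻¹ ^ j) ⊆ S :=
        (Metric.ball_subset_ball hj.le).trans hballS
      have h2 : convexHull ℝ (Metric.ball (0:W) (2⁻¹ ^ j)) ⊆ S := convexHull_min h1 hS_conv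
      exact (closure_mono (h2.trans hS_sub)).trans Metric.closure_ball_subset_closedBall
    obtain ⟨Cv, hCv⟩ := hVstrict v
    have hDpos : (0:ℝ) < |Cv| + 1 := by positivity
    set D : ℝ := |Cv| + 1 with hD
    obtain ⟨n, hn⟩ := pow_unbounded_of_one_lt (2*D) (by norm_num : (1:ℝ) < 2)
    refine ⟨((2:ℝ) ^ n)⁻¹ • K j, hbasis.mem_of_mem (i := (n, j)) trivial, ?_⟩
    rintro ⟨Bm, hBm, hEq⟩
    obtain ⟨i, hBi⟩ := Set.mem_iUnion.1 hBm
    set r : ℝ := 2⁻¹ ^ i / (2 * D) with hr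
    have hrpos : 0 < r := by positivity
    have hrv : dist (r • v) 0 < 2⁻¹ ^ i := by
      have h1 := hCv r hrpos
      have h2 : Cv * r ≤ D * r := by
        have := le_abs_self Cv
        nlinarith
      have h3 : D * r = 2⁻¹ ^ i / 2 := by
        rw [hr]
        field_simp
      have h4 : (0:ℝ) < 2⁻¹ ^ i := by positivity
      nlinarith [h1, h2, h3, h4]
    have hmemc : r • v ∈ cHull V i :=
      subset_closure (subset_convexHull ℝ _ (Metric.mem_ball.2 (by simpa using hrv)))
    have himg : (Bm : V →L[ℝ] W) (((2:ℝ) ^ i) • (r • v)) ∈ cHull W j :=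
      hBi ⟨_, ⟨r • v, hmemc, rfl⟩, rfl⟩
    have hBmA : Bm = ((2:ℝ) ^ n) • A := by
      rw [← hEq, smul_smul, mul_inv_cancel₀ (h2pow n), one_smul]
    have hcalc : (Bm : V →L[ℝ] W) (((2:ℝ) ^ i) • (r • v))
        = ((2:ℝ) ^ n * ((2:ℝ) ^ i * r)) • ((A : V →L[ℝ] W) v) := by
      rw [hBmA]
      have h5 : (((((2:ℝ) ^ n) • A : TL)) : V →L[ℝ] W) = ((2:ℝ) ^ n) • (A : V →L[ℝ] W) := rfl
      rw [h5, ContinuousLinearMap.smul_apply, map_smul, map_smul, smul_smul, smul_smul, mul_assoc]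
    set μ : ℝ := (2:ℝ) ^ n * ((2:ℝ) ^ i * r) with hμdef
    have hμ : μ = (2:ℝ) ^ n / (2 * D) := by
      rw [hμdef, hr]
      have h6 : ((2:ℝ) ^ i) * ((2⁻¹:ℝ) ^ i) = 1 := by
        rw [inv_pow, mul_inv_cancel₀ (h2pow i)]
      field_simp
      nlinarith [h6]
    have hμ1 : 1 ≤ μ := by
      rw [hμ]
      rw [le_div_iff₀ (by positivity)]
      linarith
    have hμpos : 0 < μ := lt_of_lt_of_le one_pos hμ1
    have hmemC : μ • ((A : V →L[ℝ] W) v) ∈ cHull W j := by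
      rw [← hcalc]
      exact himg
    have hAv : (A : V →L[ℝ] W) v ∈ cHull W j := by
      have h7 := cHull_balanced hWballs j μ⁻¹
        (by rw [Real.norm_eq_abs, abs_of_pos (by positivity)]; exact inv_le_one_of_one_le₀ hμ1)
        ⟨_, hmemC, rfl⟩
      have h7' : μ⁻¹ • (μ • ((A : V →L[ℝ] W) v)) ∈ cHull W j := h7
      rwa [smul_smul, inv_mul_cancel₀ (ne_of_gt hμpos), one_smul] at h7'
    have h8 : dist ((A : V →L[ℝ] W) v) 0 ≤ δ/2 := Metric.mem_closedBall.1 (hCj hAv)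
    linarith
  haveI ht1 : @T1Space TL t := @T2Space.t1Space TL t ht2
  haveI ht0 : @T0Space TL t := @T1Space.t0Space TL t ht1
  letI u : UniformSpace TL := @IsTopologicalAddGroup.rightUniformSpace TL _ t tgroup
  haveI hug : @IsUniformAddGroup TL u _ := @isUniformAddGroup_of_addCommGroup TL _ t tgroup
  haveI hcg : Filter.IsCountablyGenerated (@uniformity TL u) := by
    haveI h9 : (@nhds TL t 0).IsCountablyGenerated := hbasis.isCountablyGenerated
    exact Filter.comap.isCountablyGenerated _ _
  haveI hmetr : @TopologicalSpace.MetrizableSpace TL t :=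
    @UniformSpace.metrizableSpace TL u hcg ht0
  exact ⟨t, tgroup, tsmul, ht2, hmetr, hbasis⟩
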